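/- Let ε₁, ε₂ > 0 and let H, A, B be mutually independent, square-integrable, nonnegative real random variables on a probability space with E[H] = √(π·ε₁)/2, E[H²] = ε₁, E[A] = E[B] = √(π·ε₂)/2, and E[A²] = E[B²] = ε₂. Then Cov(H·A, H·B) = ε₁·ε₂·π·(4−π)/16, Var(H·A) = Var(H·B) = ε₁·ε₂·(1 − π²/16), and the correlation coefficient of H·A and H·B equals π·(4−π)/(16−π²). -/

import Mathlib

open MeasureTheory ProbabilityTheory Filter

lemma iIndepFun_ae_eq' {Ω ι : Type*} [MeasurableSpace Ω] {μ : Measure Ω}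
    {β : ι → Type*} [m : ∀ i, MeasurableSpace (β i)] {f g : ∀ i, Ω → β i}
    (h : iIndepFun f μ) (hfg : ∀ i, f i =ᵐ[μ] g i) : iIndepFun g μ := by
  rw [iIndepFun_iff_measure_inter_preimage_eq_mul] at h ⊢
  intro S sets hsets
  have hpre : ∀ i, f i ⁻¹' sets i =ᵐ[μ] g i ⁻¹' sets i := fun i =>
    eventuallyEq_set.2 ((hfg i).mono fun ω hω => by simp [Set.mem_preimage, hω])
  have h1 : μ (⋂ i ∈ S, g i ⁻¹' sets i) = μ (⋂ i ∈ S, f i ⁻¹' sets i) := by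
    refine measure_congr ?_
    rw [eventuallyEq_set]
    have hae : ∀ᵐ ω ∂μ, ∀ i ∈ S, (ω ∈ f i ⁻¹' sets i ↔ ω ∈ g i ⁻¹' sets i) :=
      (MeasureTheory.ae_ball_iff S.countable_toSet).2 fun i _ =>
        (hpre i).mono fun ω hω => Iff.of_eq hω
    refine hae.mono fun ω hω => ?_
    simp only [Set.mem_iInter]
    exact ⟨fun h' i hi => (hω i hi).2 (h' i hi), fun h' i hi => (hω i hi).1 (h' i hi)⟩
  rw [h1, h S hsets]
  exact Finset.prod_congr rfl fun i _ => measure_congr (hpre i)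

/-- Inter-port correlation of the block-correlation model: if `H`, `A`, `B` are
mutually independent, square-integrable, nonnegative random variables with
Rayleigh-type moments `E[H] = √(πε₁)/2`, `E[H²] = ε₁`,
`E[A] = E[B] = √(πε₂)/2`, `E[A²] = E[B²] = ε₂`, then
`Cov(HA, HB) = ε₁ε₂π(4−π)/16`, `Var(HA) = Var(HB) = ε₁ε₂(1 − π²/16)`, and the
correlation coefficient of `HA` and `HB` equals `π(4−π)/(16−π²)`. -/
theorem inter_port_correlation {Ω : Type*} [MeasureSpace Ω]
    [IsProbabilityMeasure (ℙ : Measure Ω)] (ε₁ ε₂ : ℝ) (hε₁ : 0 < ε₁) (hε₂ : 0 < ε₂)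
    (H A B : Ω → ℝ)
    (hindep : iIndepFun ![H, A, B] ℙ)
    (hH2 : MemLp H 2 ℙ) (hA2 : MemLp A 2 ℙ) (hB2 : MemLp B 2 ℙ)
    (hHpos : ∀ ω, 0 ≤ H ω) (hApos : ∀ ω, 0 ≤ A ω) (hBpos : ∀ ω, 0 ≤ B ω)
    (hEH : (∫ ω, H ω) = Real.sqrt (Real.pi * ε₁) / 2)
    (hEH2 : (∫ ω, (H ω) ^ 2) = ε₁)
    (hEA : (∫ ω, A ω) = Real.sqrt (Real.pi * ε₂) / 2)
    (hEA2 : (∫ ω, (A ω) ^ 2) = ε₂)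
    (hEB : (∫ ω, B ω) = Real.sqrt (Real.pi * ε₂) / 2)
    (hEB2 : (∫ ω, (B ω) ^ 2) = ε₂) :
    (∫ ω, (H ω * A ω - ∫ ω', H ω' * A ω') * (H ω * B ω - ∫ ω', H ω' * B ω')) =
      ε₁ * ε₂ * Real.pi * (4 - Real.pi) / 16 ∧
    variance (fun ω => H ω * A ω) ℙ = ε₁ * ε₂ * (1 - Real.pi ^ 2 / 16) ∧
    variance (fun ω => H ω * B ω) ℙ = ε₁ * ε₂ * (1 - Real.pi ^ 2 / 16) ∧
    (∫ ω, (H ω * A ω - ∫ ω', H ω' * A ω') * (H ω * B ω - ∫ ω', H ω' * B ω')) /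
        (Real.sqrt (variance (fun ω => H ω * A ω) ℙ) *
          Real.sqrt (variance (fun ω => H ω * B ω) ℙ)) =
      Real.pi * (4 - Real.pi) / (16 - Real.pi ^ 2) := by
  -- measurable versions
  have hHm : AEMeasurable H ℙ := hH2.aestronglyMeasurable.aemeasurable
  have hAm : AEMeasurable A ℙ := hA2.aestronglyMeasurable.aemeasurable
  have hBm : AEMeasurable B ℙ := hB2.aestronglyMeasurable.aemeasurable
  have heH : H =ᵐ[ℙ] hHm.mk H := hHm.ae_eq_mk
  have heA : A =ᵐ[ℙ] hAm.mk A := hAm.ae_eq_mk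
  have heB : B =ᵐ[ℙ] hBm.mk B := hBm.ae_eq_mk
  have hindep' : iIndepFun
      ![hHm.mk H, hAm.mk A, hBm.mk B] ℙ := by
    refine iIndepFun_ae_eq' hindep fun i => ?_
    fin_cases i
    · exact heH
    · exact heA
    · exact heB
  have hmeas' : ∀ i, Measurable (![hHm.mk H, hAm.mk A, hBm.mk B] i) := by
    intro i; fin_cases i
    · exact hHm.measurable_mk
    · exact hAm.measurable_mk
    · exact hBm.measurable_mk
  -- pairwise independence
  have iHA : IndepFun H A ℙ := by
    have := hindep.indepFun (i := 0) (j := 1) (by decide)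
    simpa using this
  have iHB : IndepFun H B ℙ := by
    have := hindep.indepFun (i := 0) (j := 2) (by decide)
    simpa using this
  have iAB : IndepFun A B ℙ := by
    have := hindep.indepFun (i := 1) (j := 2) (by decide)
    simpa using this
  -- H independent of A*B
  have iH_AB : IndepFun H (fun ω => A ω * B ω) ℙ := by
    have h' := hindep'.indepFun_mul_right hmeas' 0 1 2 (by decide) (by decide)
    simp only [Matrix.cons_val_zero, Matrix.cons_val_one, Matrix.head_cons,
      Matrix.cons_val_two, Matrix.tail_cons] at h'
    refine h'.congr heH.symm ?_
    filter_upwards [heA, heB] with ω h1 h2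
    simp only [Pi.mul_apply, h1, h2]
  -- squares independent
  have iH2_A2 : IndepFun (fun ω => H ω ^ 2) (fun ω => A ω ^ 2) ℙ :=
    iHA.comp (measurable_id.pow_const 2) (measurable_id.pow_const 2)
  have iH2_B2 : IndepFun (fun ω => H ω ^ 2) (fun ω => B ω ^ 2) ℙ :=
    iHB.comp (measurable_id.pow_const 2) (measurable_id.pow_const 2)
  have iH2_AB : IndepFun (fun ω => H ω ^ 2) (fun ω => A ω * B ω) ℙ :=
    iH_AB.comp (measurable_id.pow_const 2) measurable_id
  -- integrability
  have intH : Integrable H ℙ := hH2.integrable one_le_two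
  have intA : Integrable A ℙ := hA2.integrable one_le_two
  have intB : Integrable B ℙ := hB2.integrable one_le_two
  have intH2 : Integrable (fun ω => H ω ^ 2) ℙ := by
    have := hH2.integrable_sq; simpa [sq] using this
  have intA2 : Integrable (fun ω => A ω ^ 2) ℙ := by
    have := hA2.integrable_sq; simpa [sq] using this
  have intB2 : Integrable (fun ω => B ω ^ 2) ℙ := by
    have := hB2.integrable_sq; simpa [sq] using this
  have intAB : Integrable (fun ω => A ω * B ω) ℙ := by
    have := iAB.integrable_mul intA intB; simpa [Pi.mul_def] using this
  have intHA : Integrable (fun ω => H ω * A ω) ℙ := by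
    have := iHA.integrable_mul intH intA; simpa [Pi.mul_def] using this
  have intHB : Integrable (fun ω => H ω * B ω) ℙ := by
    have := iHB.integrable_mul intH intB; simpa [Pi.mul_def] using this
  have intH2A2 : Integrable (fun ω => H ω ^ 2 * A ω ^ 2) ℙ := by
    have := iH2_A2.integrable_mul intH2 intA2; simpa [Pi.mul_def] using this
  have intH2B2 : Integrable (fun ω => H ω ^ 2 * B ω ^ 2) ℙ := by
    have := iH2_B2.integrable_mul intH2 intB2; simpa [Pi.mul_def] using this
  have intH2AB : Integrable (fun ω => H ω ^ 2 * (A ω * B ω)) ℙ := by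
    have := iH2_AB.integrable_mul intH2 intAB; simpa [Pi.mul_def] using this
  -- Memℒp 2 of products
  have memHA : MemLp (fun ω => H ω * A ω) 2 ℙ :=
    (memLp_two_iff_integrable_sq (hH2.aestronglyMeasurable.mul
      hA2.aestronglyMeasurable)).2
      (intH2A2.congr (Filter.Eventually.of_forall fun ω => (mul_pow (H ω) (A ω) 2).symm))
  have memHB : MemLp (fun ω => H ω * B ω) 2 ℙ :=
    (memLp_two_iff_integrable_sq (hH2.aestronglyMeasurable.mul
      hB2.aestronglyMeasurable)).2
      (intH2B2.congr (Filter.Eventually.of_forall fun ω => (mul_pow (H ω) (B ω) 2).symm))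
  -- first moments of products
  have hEHA : (∫ ω, H ω * A ω) = (∫ ω, H ω) * (∫ ω, A ω) := by
    have := iHA.integral_mul_eq_mul_integral intH.aestronglyMeasurable intA.aestronglyMeasurable
    simpa [Pi.mul_def] using this
  have hEHB : (∫ ω, H ω * B ω) = (∫ ω, H ω) * (∫ ω, B ω) := by
    have := iHB.integral_mul_eq_mul_integral intH.aestronglyMeasurable intB.aestronglyMeasurable
    simpa [Pi.mul_def] using this
  have hEAB : (∫ ω, A ω * B ω) = (∫ ω, A ω) * (∫ ω, B ω) := by
    have := iAB.integral_mul_eq_mul_integral intA.aestronglyMeasurable intB.aestronglyMeasurable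
    simpa [Pi.mul_def] using this
  have hEH2A2 : (∫ ω, H ω ^ 2 * A ω ^ 2) = ε₁ * ε₂ := by
    have := iH2_A2.integral_mul_eq_mul_integral intH2.aestronglyMeasurable intA2.aestronglyMeasurable
    simp only [Pi.mul_def] at this
    rw [this, hEH2, hEA2]
  have hEH2B2 : (∫ ω, H ω ^ 2 * B ω ^ 2) = ε₁ * ε₂ := by
    have := iH2_B2.integral_mul_eq_mul_integral intH2.aestronglyMeasurable intB2.aestronglyMeasurable
    simp only [Pi.mul_def] at this
    rw [this, hEH2, hEB2]
  have hEH2AB : (∫ ω, H ω ^ 2 * (A ω * B ω)) = ε₁ * ((∫ ω, A ω) * (∫ ω, B ω)) := by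
    have := iH2_AB.integral_mul_eq_mul_integral intH2.aestronglyMeasurable intAB.aestronglyMeasurable
    simp only [Pi.mul_def] at this
    rw [this, hEH2, hEAB]
  -- sqrt facts
  have hπpos : (0:ℝ) < Real.pi := Real.pi_pos
  have hs1 : Real.sqrt (Real.pi * ε₁) ^ 2 = Real.pi * ε₁ :=
    Real.sq_sqrt (by positivity)
  have hs2 : Real.sqrt (Real.pi * ε₂) ^ 2 = Real.pi * ε₂ :=
    Real.sq_sqrt (by positivity)
  have hEAEB : (∫ ω, A ω) * (∫ ω, B ω) = Real.pi * ε₂ / 4 := by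
    rw [hEA, hEB, show Real.sqrt (Real.pi * ε₂) / 2 * (Real.sqrt (Real.pi * ε₂) / 2) =
      Real.sqrt (Real.pi * ε₂) ^ 2 / 4 from by ring, hs2]
  have ha2 : (∫ ω, H ω * A ω) ^ 2 = Real.pi ^ 2 * ε₁ * ε₂ / 16 := by
    rw [hEHA, hEH, hEA, show (Real.sqrt (Real.pi * ε₁) / 2 *
        (Real.sqrt (Real.pi * ε₂) / 2)) ^ 2 =
      Real.sqrt (Real.pi * ε₁) ^ 2 * Real.sqrt (Real.pi * ε₂) ^ 2 / 16 from by ring,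
      hs1, hs2]
    ring
  have hb2 : (∫ ω, H ω * B ω) ^ 2 = Real.pi ^ 2 * ε₁ * ε₂ / 16 := by
    rw [hEHB, hEH, hEB, show (Real.sqrt (Real.pi * ε₁) / 2 *
        (Real.sqrt (Real.pi * ε₂) / 2)) ^ 2 =
      Real.sqrt (Real.pi * ε₁) ^ 2 * Real.sqrt (Real.pi * ε₂) ^ 2 / 16 from by ring,
      hs1, hs2]
    ring
  have hab : (∫ ω, H ω * A ω) * (∫ ω, H ω * B ω) = Real.pi ^ 2 * ε₁ * ε₂ / 16 := by
    rw [hEHA, hEHB, hEH, hEA, hEB, show Real.sqrt (Real.pi * ε₁) / 2 *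
        (Real.sqrt (Real.pi * ε₂) / 2) * (Real.sqrt (Real.pi * ε₁) / 2 *
        (Real.sqrt (Real.pi * ε₂) / 2)) =
      Real.sqrt (Real.pi * ε₁) ^ 2 * Real.sqrt (Real.pi * ε₂) ^ 2 / 16 from by ring,
      hs1, hs2]
    ring
  -- covariance
  have hEXY : (∫ ω, (H ω * A ω) * (H ω * B ω)) = ε₁ * (Real.pi * ε₂ / 4) := by
    rw [show (∫ ω, (H ω * A ω) * (H ω * B ω)) = ∫ ω, H ω ^ 2 * (A ω * B ω) from
      integral_congr_ae (Filter.Eventually.of_forall fun ω => by ring)]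
    rw [hEH2AB, hEAEB]
  have intXY : Integrable (fun ω => (H ω * A ω) * (H ω * B ω)) ℙ :=
    intH2AB.congr (Filter.Eventually.of_forall fun ω => by ring)
  have hcov : (∫ ω, (H ω * A ω - ∫ ω', H ω' * A ω') * (H ω * B ω - ∫ ω', H ω' * B ω')) =
      (∫ ω, (H ω * A ω) * (H ω * B ω)) -
        (∫ ω, H ω * A ω) * (∫ ω, H ω * B ω) := by
    have hexp : ∀ ω, (H ω * A ω - ∫ ω', H ω' * A ω') * (H ω * B ω - ∫ ω', H ω' * B ω') =
        (H ω * A ω) * (H ω * B ω) - (∫ ω', H ω' * A ω') * (H ω * B ω)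
          - (∫ ω', H ω' * B ω') * (H ω * A ω)
          + (∫ ω', H ω' * A ω') * (∫ ω', H ω' * B ω') := fun ω => by ring
    have i1 : Integrable (fun ω => H ω * A ω * (H ω * B ω) -
        (∫ ω', H ω' * A ω') * (H ω * B ω)) ℙ := intXY.sub (intHB.const_mul _)
    have i2 : Integrable (fun ω => H ω * A ω * (H ω * B ω) -
        (∫ ω', H ω' * A ω') * (H ω * B ω) -
        (∫ ω', H ω' * B ω') * (H ω * A ω)) ℙ := i1.sub (intHA.const_mul _)
    rw [integral_congr_ae (Filter.Eventually.of_forall hexp)]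
    rw [integral_add i2 (integrable_const _)]
    rw [integral_sub i1 (intHA.const_mul _)]
    rw [integral_sub intXY (intHB.const_mul _)]
    rw [integral_const_mul, integral_const_mul, integral_const]
    simp only [probReal_univ, smul_eq_mul, one_mul]
    ring
  have hcovval : (∫ ω, (H ω * A ω - ∫ ω', H ω' * A ω') *
      (H ω * B ω - ∫ ω', H ω' * B ω')) = ε₁ * ε₂ * Real.pi * (4 - Real.pi) / 16 := by
    rw [hcov, hEXY, hab]; ring
  -- variances
  have hvarA : variance (fun ω => H ω * A ω) ℙ = ε₁ * ε₂ * (1 - Real.pi ^ 2 / 16) := by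
    rw [variance_eq_sub memHA]
    simp only [Pi.pow_apply]
    rw [show (∫ ω, (H ω * A ω) ^ 2) = ∫ ω, H ω ^ 2 * A ω ^ 2 from
      integral_congr_ae (Filter.Eventually.of_forall fun ω => by ring),
      hEH2A2]
    rw [ha2]; ring
  have hvarB : variance (fun ω => H ω * B ω) ℙ = ε₁ * ε₂ * (1 - Real.pi ^ 2 / 16) := by
    rw [variance_eq_sub memHB]
    simp only [Pi.pow_apply]
    rw [show (∫ ω, (H ω * B ω) ^ 2) = ∫ ω, H ω ^ 2 * B ω ^ 2 from
      integral_congr_ae (Filter.Eventually.of_forall fun ω => by ring),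
      hEH2B2]
    rw [hb2]; ring
  refine ⟨hcovval, hvarA, hvarB, ?_⟩
  -- the correlation coefficient
  have hπlt : Real.pi ^ 2 < 16 := by nlinarith [Real.pi_lt_d2]
  have h16 : (0:ℝ) < 16 - Real.pi ^ 2 := by linarith
  have hvpos : (0:ℝ) < ε₁ * ε₂ * (1 - Real.pi ^ 2 / 16) := by
    rw [show ε₁ * ε₂ * (1 - Real.pi ^ 2 / 16) = ε₁ * ε₂ * (16 - Real.pi ^ 2) / 16 from by ring]
    exact div_pos (mul_pos (mul_pos hε₁ hε₂) h16) (by norm_num)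
  rw [hcovval, hvarA, hvarB, Real.mul_self_sqrt (le_of_lt hvpos)]
  rw [div_eq_div_iff (ne_of_gt hvpos)
    (ne_of_gt (by linarith : (0:ℝ) < 16 - Real.pi ^ 2))]
  ring
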